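/- Let Q be the quadratic form x ↦ x² on ℝ (viewed as a module over itself). The submonoid of CliffordAlgebra Q generated by the set {ι(v) : v ∈ ℝ, Q(v) = 1} (that is, generated by ι(1) and ι(−1)) is isomorphic, as a monoid, to the Klein four-group Multiplicative (ZMod 2 × ZMod 2). (This is the paper's claim that the positive Pin group in dimension one satisfies Pin⁺₁ ≅ ℤ/2 × ℤ/2.) -/

import Mathlib

open CliffordAlgebra

/-- The quadratic form `x ↦ x²` on `ℝ`. -/
noncomputable def sqForm : QuadraticForm ℝ ℝ := QuadraticMap.sq

lemma sqForm_apply (v : ℝ) : sqForm v = v * v := by simp [sqForm]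

lemma u_sq : ι sqForm (1:ℝ) * ι sqForm 1 = 1 := by
  rw [ι_sq_scalar]; simp [sqForm_apply]

/-- The algebra map splitting the Clifford algebra of `x ↦ x²` on `ℝ`: `ι v ↦ (v, -v)`. -/
noncomputable def Fhom : CliffordAlgebra sqForm →ₐ[ℝ] ℝ × ℝ :=
  CliffordAlgebra.lift sqForm ⟨LinearMap.prod LinearMap.id (-LinearMap.id), fun v => by
    ext <;> simp [sqForm_apply]⟩

lemma Fhom_ι (v : ℝ) : Fhom (ι sqForm v) = (v, -v) := by
  rw [Fhom, lift_ι_apply]; simp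

/-- `(a, b) ↦ (-1)^a * (ι 1)^b`. -/
noncomputable def gfun : ZMod 2 × ZMod 2 → CliffordAlgebra sqForm :=
  fun p => (-1) ^ p.1.val * (ι sqForm 1) ^ p.2.val

lemma v0 : (0 : ZMod 2).val = 0 := rfl
lemma v1 : (1 : ZMod 2).val = 1 := rfl
lemma v11 : (1 + 1 : ZMod 2).val = 0 := rfl
lemma z2 : ∀ x : ZMod 2, x = 0 ∨ x = 1 := by decide

lemma gfun_add (x y : ZMod 2 × ZMod 2) : gfun (x + y) = gfun x * gfun y := by
  obtain ⟨a, b⟩ := x; obtain ⟨c, d⟩ := y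
  have h := u_sq
  rcases z2 a with rfl | rfl <;> rcases z2 b with rfl | rfl <;> rcases z2 c with rfl | rfl <;> rcases z2 d with rfl | rfl <;>
    simp [gfun, v0, v1, v11, h, pow_two, mul_assoc, neg_mul, mul_neg]

/-- `gfun` as a monoid hom from the Klein four-group. -/
noncomputable def ghom : Multiplicative (ZMod 2 × ZMod 2) →* CliffordAlgebra sqForm where
  toFun p := gfun p.toAdd
  map_one' := by simp [gfun, v0]
  map_mul' p q := gfun_add _ _

lemma Fhom_gfun (p : ZMod 2 × ZMod 2) :
    Fhom (gfun p) = ((-1 : ℝ) ^ p.1.val, (-1 : ℝ) ^ p.1.val * (-1 : ℝ) ^ p.2.val) := by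
  obtain ⟨a, b⟩ := p
  rcases z2 a with rfl | rfl <;> rcases z2 b with rfl | rfl <;>
    simp [gfun, v0, v1, Fhom_ι, Prod.ext_iff]

lemma gfun_inj : Function.Injective fun p : ZMod 2 × ZMod 2 => Fhom (gfun p) := by
  intro x y h
  simp only [Fhom_gfun] at h
  obtain ⟨a, b⟩ := x; obtain ⟨c, d⟩ := y
  rcases z2 a with rfl | rfl <;> rcases z2 b with rfl | rfl <;> rcases z2 c with rfl | rfl <;> rcases z2 d with rfl | rfl <;>
    simp_all [v0, v1, Prod.ext_iff] <;> norm_num at h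

/-- For the quadratic form `Q(x) = x²` on `ℝ`, the submonoid of the Clifford
algebra of `Q` generated by `{ι v : Q v = 1}` (i.e. by `ι 1` and `ι (-1)`) is isomorphic, as a
monoid, to the Klein four-group `ℤ/2 × ℤ/2`; this is the claim `Pin⁺₁ ≅ ℤ/2 × ℤ/2`. -/
theorem pinPlus_one_iso_kleinFour :
    Nonempty
      ((Submonoid.closure
          {x : CliffordAlgebra sqForm | ∃ v : ℝ, sqForm v = 1 ∧ ι sqForm v = x}) ≃*
        Multiplicative (ZMod 2 × ZMod 2)) := by
  set S : Set (CliffordAlgebra sqForm) :=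
    {x : CliffordAlgebra sqForm | ∃ v : ℝ, sqForm v = 1 ∧ ι sqForm v = x} with hS
  set M := Submonoid.closure S with hM
  have hu : ι sqForm (1:ℝ) ∈ M := Submonoid.subset_closure ⟨1, by simp [sqForm_apply], rfl⟩
  have hnu : ι sqForm (-1:ℝ) ∈ M := Submonoid.subset_closure ⟨-1, by simp [sqForm_apply], rfl⟩
  have hneg1 : (-1 : CliffordAlgebra sqForm) ∈ M := by
    have : ι sqForm (1:ℝ) * ι sqForm (-1:ℝ) = -1 := by
      rw [map_neg, mul_neg, u_sq]
    exact this ▸ M.mul_mem hu hnu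
  have hmem : ∀ p : Multiplicative (ZMod 2 × ZMod 2), ghom p ∈ M := by
    intro p
    show gfun p.toAdd ∈ M
    exact M.mul_mem (M.pow_mem hneg1 _) (M.pow_mem hu _)
  let g' : Multiplicative (ZMod 2 × ZMod 2) →* M := ghom.codRestrict M hmem
  have hinj : Function.Injective g' := by
    intro p q h
    have h2 : Fhom (gfun p.toAdd) = Fhom (gfun q.toAdd) :=
      congrArg Fhom (congrArg Subtype.val h)
    have := gfun_inj h2
    exact Multiplicative.toAdd.injective this
  have hsurj : Function.Surjective g' := by
    rintro ⟨x, hx⟩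
    refine Submonoid.closure_induction (fun y hy => ?_) ?_ ?_ hx
    · obtain ⟨v, hv, rfl⟩ := hy
      have hv' : v = 1 ∨ v = -1 := by
        rw [sqForm_apply] at hv
        exact mul_self_eq_one_iff.mp hv
      rcases hv' with rfl | rfl
      · exact ⟨Multiplicative.ofAdd (0, 1), Subtype.ext (by simp [g', ghom, gfun, v0, v1])⟩
      · refine ⟨Multiplicative.ofAdd (1, 1), Subtype.ext ?_⟩
        show gfun (1, 1) = ι sqForm (-1:ℝ)
        simp [gfun, v1, map_neg, neg_mul]
    · exact ⟨1, Subtype.ext (by simp [g', ghom, gfun, v0])⟩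
    · rintro y z hy hz ⟨p, hp⟩ ⟨q, hq⟩
      refine ⟨p * q, ?_⟩
      rw [map_mul, hp, hq]
      rfl
  exact ⟨(MulEquiv.ofBijective g' ⟨hinj, hsurj⟩).symm⟩
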